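/- For (x₁, x₂, x₃) ∈ ℂ³, the strict inequality |x₁ − conj(x₂)x₃| + |x₁x₂ − x₃| < 1 − |x₂|² holds if and only if |x₂ − conj(x₁)x₃| + |x₁x₂ − x₃| < 1 − |x₁|² holds. -/

import Mathlib

private lemma nsq_id (u v w : ℂ) :
    Complex.normSq (u - (starRingEnd ℂ) v * w) =
      Complex.normSq (u * v - w) +
        (1 - Complex.normSq v) * (Complex.normSq u - Complex.normSq w) := by
  simp only [Complex.normSq_apply, Complex.sub_re, Complex.sub_im,
    Complex.mul_re, Complex.mul_im, Complex.conj_re, Complex.conj_im]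
  ring

private lemma real_aux (a b t A B C : ℝ)
    (ha0 : 0 ≤ a) (hb0 : 0 ≤ b) (ht0 : 0 ≤ t)
    (hA0 : 0 ≤ A) (hB0 : 0 ≤ B) (hC0 : 0 ≤ C)
    (h : A + C < 1 - b ^ 2)
    (ha : a * (1 - b ^ 2) ≤ A + b * C)
    (ht : t * (1 - b ^ 2) ≤ C + b * A)
    (idB : B ^ 2 = C ^ 2 + (1 - a ^ 2) * (b ^ 2 - t ^ 2))
    (idA : A ^ 2 = C ^ 2 + (1 - b ^ 2) * (a ^ 2 - t ^ 2)) :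
    B + C < 1 - a ^ 2 := by
  have hb2 : b ^ 2 < 1 := by nlinarith
  have hb1 : b < 1 := by nlinarith
  have ha1 : a < 1 := by nlinarith [mul_nonneg hC0 (sub_nonneg.2 hb1.le)]
  have h1a : 0 < 1 - a ^ 2 := by nlinarith
  have f1 : 0 < 1 - b ^ 2 - C - A := by linarith
  have f2 : 0 < 1 - b ^ 2 - C + A := by linarith
  have eqA : (1 - b ^ 2 - C - A) * (1 - b ^ 2 - C + A)
      = (1 - b ^ 2) * (1 - a ^ 2 - b ^ 2 + t ^ 2 - 2 * C) := by
    linear_combination (-1 : ℝ) * idA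
  have hP : 0 < (1 - b ^ 2) * (1 - a ^ 2 - b ^ 2 + t ^ 2 - 2 * C) :=
    eqA ▸ mul_pos f1 f2
  have hS : 0 < 1 - a ^ 2 - b ^ 2 + t ^ 2 - 2 * C := by
    by_contra hs
    push_neg at hs
    nlinarith [mul_nonneg (show (0:ℝ) ≤ 1 - b ^ 2 by linarith) (neg_nonneg.mpr hs)]
  have hC : C < 1 - a ^ 2 := by
    by_contra hc
    push_neg at hc
    have htb : t * (1 + b) ≤ C + b * (1 + b) := by
      have hk : (1 - b) * (t * (1 + b)) ≤ (1 - b) * (C + b * (1 + b)) := by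
        nlinarith [mul_nonneg hb0 f1.le]
      exact le_of_mul_le_mul_left hk (by linarith)
    have ht2 : (t * (1 + b)) ^ 2 ≤ (C + b * (1 + b)) ^ 2 := by
      have h0 : 0 ≤ t * (1 + b) := by positivity
      exact pow_le_pow_left₀ h0 htb 2
    have hS2 : 0 < (1 + b) ^ 2 * (1 - a ^ 2 - b ^ 2 + t ^ 2 - 2 * C) := by
      exact mul_pos (by positivity) hS
    have hD : 0 ≤ (C + b * (1 + b)) ^ 2 - (t * (1 + b)) ^ 2 := by linarith
    have eqK : (1 - a ^ 2) * (1 + b) ^ 2 - C * (2 * (1 + b) - C)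
        = (1 + b) ^ 2 * (1 - a ^ 2 - b ^ 2 + t ^ 2 - 2 * C)
          + ((C + b * (1 + b)) ^ 2 - (t * (1 + b)) ^ 2) := by ring
    have key : C * (2 * (1 + b) - C) < (1 - a ^ 2) * (1 + b) ^ 2 := by linarith
    have h2bC : (0:ℝ) ≤ 2 * (1 + b) - C := by nlinarith
    have hmul : (1 - a ^ 2) * (2 * (1 + b) - C) ≤ C * (2 * (1 + b) - C) :=
      mul_le_mul_of_nonneg_right hc h2bC
    have hfc : 0 < (1 - a ^ 2) * (1 - b ^ 2 - C) :=
      mul_pos h1a (by linarith)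
    have eqF : (1 - a ^ 2) * (2 * (1 + b) - C) - (1 - a ^ 2) * (1 + b) ^ 2
        = (1 - a ^ 2) * (1 - b ^ 2 - C) := by ring
    linarith
  have hX : 0 < 1 - a ^ 2 - C := by linarith
  have eq2 : (1 - a ^ 2 - C) ^ 2 - B ^ 2
      = (1 - a ^ 2) * (1 - a ^ 2 - b ^ 2 + t ^ 2 - 2 * C) := by
    linear_combination (-1 : ℝ) * idB
  have hsq : B ^ 2 < (1 - a ^ 2 - C) ^ 2 := by
    have := mul_pos h1a hS
    linarith
  by_contra hg
  push_neg at hg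
  have : (1 - a ^ 2 - C) ^ 2 ≤ B ^ 2 := pow_le_pow_left₀ hX.le (by linarith) 2
  linarith

private lemma tetra_aux (x₁ x₂ x₃ : ℂ)
    (h : ‖x₁ - (starRingEnd ℂ) x₂ * x₃‖ + ‖x₁ * x₂ - x₃‖
      < 1 - (‖x₂‖) ^ 2) :
    ‖x₂ - (starRingEnd ℂ) x₁ * x₃‖ + ‖x₁ * x₂ - x₃‖
      < 1 - (‖x₁‖) ^ 2 := by
  have idA : (‖x₁ - (starRingEnd ℂ) x₂ * x₃‖) ^ 2 =
      (‖x₁ * x₂ - x₃‖) ^ 2 +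
        (1 - (‖x₂‖) ^ 2) * ((‖x₁‖) ^ 2 - (‖x₃‖) ^ 2) := by
    simp only [Complex.sq_norm]
    exact nsq_id x₁ x₂ x₃
  have idB : (‖x₂ - (starRingEnd ℂ) x₁ * x₃‖) ^ 2 =
      (‖x₁ * x₂ - x₃‖) ^ 2 +
        (1 - (‖x₁‖) ^ 2) * ((‖x₂‖) ^ 2 - (‖x₃‖) ^ 2) := by
    simp only [Complex.sq_norm]
    rw [mul_comm x₁ x₂]
    exact nsq_id x₂ x₁ x₃
  have hb2 : (‖x₂‖) ^ 2 < 1 := by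
    have h1 := norm_nonneg (x₁ - (starRingEnd ℂ) x₂ * x₃)
    have h2 := norm_nonneg (x₁ * x₂ - x₃)
    linarith
  have hnsq : ((Complex.normSq x₂ : ℝ) : ℂ) = (starRingEnd ℂ) x₂ * x₂ :=
    Complex.normSq_eq_conj_mul_self
  have habs1 : ‖1 - ((Complex.normSq x₂ : ℝ) : ℂ)‖ = 1 - (‖x₂‖) ^ 2 := by
    rw [show (1 - ((Complex.normSq x₂ : ℝ) : ℂ)) = (((1 - Complex.normSq x₂ : ℝ)) : ℂ) by
      push_cast; ring]
    rw [Complex.norm_real, Real.norm_eq_abs, abs_of_nonneg (by rw [← Complex.sq_norm]; linarith),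
      ← Complex.sq_norm]
  have ha : ‖x₁‖ * (1 - (‖x₂‖) ^ 2)
      ≤ ‖x₁ - (starRingEnd ℂ) x₂ * x₃‖
        + ‖x₂‖ * ‖x₁ * x₂ - x₃‖ := by
    have e : x₁ * (1 - ((Complex.normSq x₂ : ℝ) : ℂ)) =
        (x₁ - (starRingEnd ℂ) x₂ * x₃) - (starRingEnd ℂ) x₂ * (x₁ * x₂ - x₃) := by
      rw [hnsq]; ring
    calc ‖x₁‖ * (1 - (‖x₂‖) ^ 2)
        = ‖x₁ * (1 - ((Complex.normSq x₂ : ℝ) : ℂ))‖ := by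
          rw [norm_mul, habs1]
      _ ≤ ‖x₁ - (starRingEnd ℂ) x₂ * x₃‖
            + ‖(starRingEnd ℂ) x₂ * (x₁ * x₂ - x₃)‖ := by
          rw [e]; exact norm_sub_le _ _
      _ = _ := by rw [norm_mul, Complex.norm_conj]
  have ht : ‖x₃‖ * (1 - (‖x₂‖) ^ 2)
      ≤ ‖x₁ * x₂ - x₃‖
        + ‖x₂‖ * ‖x₁ - (starRingEnd ℂ) x₂ * x₃‖ := by
    have e : x₃ * (1 - ((Complex.normSq x₂ : ℝ) : ℂ)) =
        x₂ * (x₁ - (starRingEnd ℂ) x₂ * x₃) - (x₁ * x₂ - x₃) := by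
      rw [hnsq]; ring
    calc ‖x₃‖ * (1 - (‖x₂‖) ^ 2)
        = ‖x₃ * (1 - ((Complex.normSq x₂ : ℝ) : ℂ))‖ := by
          rw [norm_mul, habs1]
      _ ≤ ‖x₂ * (x₁ - (starRingEnd ℂ) x₂ * x₃)‖
            + ‖x₁ * x₂ - x₃‖ := by
          rw [e]; exact norm_sub_le _ _
      _ = _ := by rw [norm_mul]; ring
  exact real_aux (‖x₁‖) (‖x₂‖) (‖x₃‖)
    (‖x₁ - (starRingEnd ℂ) x₂ * x₃‖)
    (‖x₂ - (starRingEnd ℂ) x₁ * x₃‖)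
    (‖x₁ * x₂ - x₃‖)
    (norm_nonneg _) (norm_nonneg _) (norm_nonneg _)
    (norm_nonneg _) (norm_nonneg _) (norm_nonneg _) h ha ht idB idA

theorem stmt_3 (x₁ x₂ x₃ : ℂ) :
    (‖x₁ - (starRingEnd ℂ) x₂ * x₃‖ + ‖x₁ * x₂ - x₃‖
      < 1 - (‖x₂‖) ^ 2) ↔
    (‖x₂ - (starRingEnd ℂ) x₁ * x₃‖ + ‖x₁ * x₂ - x₃‖
      < 1 - (‖x₁‖) ^ 2) := by
  constructor
  · exact tetra_aux x₁ x₂ x₃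
  · intro h
    have h' := tetra_aux x₂ x₁ x₃ (by rwa [mul_comm x₁ x₂] at h)
    rwa [mul_comm x₂ x₁] at h'
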